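/- Kantorovich–Newton convergence (Gragg–Tapia form): Let D ⊆ ℝⁿ be open convex, F : D → ℝⁿ differentiable with Jacobian F′ Lipschitz on D with constant L (in the sense ‖[F′(x)]v − [F′(y)]v‖_∞ ≤ L‖x−y‖_∞‖v‖_∞). Suppose x₀ ∈ D, [F′(x₀)]⁻¹ exists, ‖[F′(x₀)]⁻¹‖_∞ ≤ ℵ, ‖[F′(x₀)]⁻¹F(x₀)‖_∞ ≤ δ, ρ = 2ℵLδ ≤ 1, and B(x₀, t*) ⊆ D where t* = 2δ/(1+√(1−ρ)). Then the Newton iterates x_{k+1} = x_k − [F′(x_k)]⁻¹F(x_k) are well defined, remain in B(x₀,t*), converge to some x* ∈ closure(B(x₀,t*)), and F(x*) = 0. -/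

import Mathlib

open Metric Filter

noncomputable def kantT (K δ : ℝ) : ℕ → ℝ
  | 0 => 0
  | k+1 => kantT K δ k +
      (K/2 * (kantT K δ k)^2 - kantT K δ k + δ)/(1 - K * kantT K δ k)

lemma kantT_zero (K δ : ℝ) : kantT K δ 0 = 0 := rfl

lemma kantT_succ (K δ : ℝ) (k : ℕ) :
    kantT K δ (k+1) = kantT K δ k +
      (K/2 * (kantT K δ k)^2 - kantT K δ k + δ)/(1 - K * kantT K δ k) := rfl

lemma kant_newton (K δ s : ℝ) (h : 1 - K*s ≠ 0) :
    K/2*(s + (K/2*s^2 - s + δ)/(1-K*s))^2 - (s + (K/2*s^2 - s + δ)/(1-K*s)) + δ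
      = K/2*((K/2*s^2 - s + δ)/(1-K*s))^2 := by
  field_simp
  ring

/-- One Newton step `x ↦ x − [F′(x)]⁻¹ F(x)` (with the matrix inverse). -/
noncomputable def newtonStep {n : ℕ} (F : (Fin n → ℝ) → (Fin n → ℝ))
    (F' : (Fin n → ℝ) → Matrix (Fin n) (Fin n) ℝ) (x : Fin n → ℝ) : Fin n → ℝ :=
  x - (F' x)⁻¹.mulVec (F x)

set_option maxHeartbeats 1000000 in
/-- Kantorovich–Newton convergence, Gragg–Tapia form.
Let `D ⊆ ℝⁿ` (with the sup norm) be open and convex, `F : D → ℝⁿ`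
differentiable with Jacobian `F′` Lipschitz on `D` with constant `L` (in the
sense `‖(F′(x) − F′(y))v‖_∞ ≤ L‖x−y‖_∞‖v‖_∞`). If `x₀ ∈ D`, `F′(x₀)` is
invertible with `‖F′(x₀)⁻¹v‖_∞ ≤ ℵ‖v‖_∞`, `‖F′(x₀)⁻¹F(x₀)‖_∞ ≤ δ`,
`ρ = 2ℵLδ ≤ 1`, and the closed ball `B(x₀, t*) ⊆ D` where
`t* = 2δ/(1+√(1−ρ))`, then the Newton iterates exist (each Jacobian along the
way is invertible), remain in `B(x₀, t*)`, and converge to a zero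
`x* ∈ closure(B(x₀, t*))` of `F`. -/
theorem stmt_16 {n : ℕ} (D : Set (Fin n → ℝ)) (hD : IsOpen D) (hDconv : Convex ℝ D)
    (F : (Fin n → ℝ) → (Fin n → ℝ)) (F' : (Fin n → ℝ) → Matrix (Fin n) (Fin n) ℝ)
    (hF : ∀ x ∈ D, HasFDerivAt F
      (LinearMap.toContinuousLinearMap ((F' x).mulVecLin)) x)
    (L : ℝ) (hL : 0 < L)
    (hLip : ∀ x ∈ D, ∀ y ∈ D, ∀ v : Fin n → ℝ,
      ‖(F' x).mulVec v - (F' y).mulVec v‖ ≤ L * ‖x - y‖ * ‖v‖)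
    (x₀ : Fin n → ℝ) (hx₀ : x₀ ∈ D)
    (hinv : IsUnit (F' x₀).det)
    (ℵ δ : ℝ) (hℵ : 0 < ℵ) (hδ : 0 < δ)
    (hbound : ∀ v : Fin n → ℝ, ‖(F' x₀)⁻¹.mulVec v‖ ≤ ℵ * ‖v‖)
    (hFx₀ : ‖(F' x₀)⁻¹.mulVec (F x₀)‖ ≤ δ)
    (hρ : 2 * ℵ * L * δ ≤ 1)
    (hball : closedBall x₀ (2 * δ / (1 + Real.sqrt (1 - 2 * ℵ * L * δ))) ⊆ D) :
    (∀ k : ℕ, (newtonStep F F')^[k] x₀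
        ∈ closedBall x₀ (2 * δ / (1 + Real.sqrt (1 - 2 * ℵ * L * δ))) ∧
      IsUnit (F' ((newtonStep F F')^[k] x₀)).det) ∧
    ∃ xstar ∈ closure
        (closedBall x₀ (2 * δ / (1 + Real.sqrt (1 - 2 * ℵ * L * δ)))),
      Tendsto (fun k => (newtonStep F F')^[k] x₀) atTop (nhds xstar) ∧
      F xstar = 0 := by
  -- abbreviations
  set A := (F' x₀)⁻¹ with hAdef
  set σ := Real.sqrt (1 - 2 * ℵ * L * δ) with hσdef
  set tstar := 2 * δ / (1 + σ) with htsdef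
  set K := ℵ * L with hKdef
  have hK : 0 < K := mul_pos hℵ hL
  -- scalar facts
  have hσnn : (0:ℝ) ≤ 1 - 2 * ℵ * L * δ := by linarith
  have hσ0 : 0 ≤ σ := Real.sqrt_nonneg _
  have hσ2 : σ^2 = 1 - 2*K*δ := by rw [hσdef, Real.sq_sqrt hσnn, hKdef]; ring
  have h1σ : (0:ℝ) < 1 + σ := by linarith
  have htspos : 0 < tstar := by rw [htsdef]; positivity
  have h2δ : tstar * (1+σ) = 2*δ := div_mul_cancel₀ _ (ne_of_gt h1σ)
  have hKt : K * tstar = 1 - σ := by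
    rw [htsdef]; field_simp; linear_combination hσ2
  have hden : ∀ s : ℝ, 0 < tstar - s → 0 < 1 - K*s := by
    intro s hs
    have h : 1 - K*s = σ + K*(tstar - s) := by linear_combination -hKt
    nlinarith [mul_pos hK hs]
  have hpt : ∀ s : ℝ, K/2*s^2 - s + δ = σ*(tstar - s) + K/2*(tstar - s)^2 := by
    intro s
    linear_combination (s - tstar/2) * hKt - (1/2) * h2δ
  have hstep : ∀ s : ℝ, 0 ≤ s → 0 < tstar - s →
      0 ≤ (K/2*s^2 - s + δ)/(1-K*s) ∧
      0 < tstar - (s + (K/2*s^2 - s + δ)/(1-K*s)) ∧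
      tstar - (s + (K/2*s^2 - s + δ)/(1-K*s)) ≤ (tstar - s)/2 := by
    intro s hs0 hse
    have hden_s := hden s hse
    have hden_eq : 1 - K*s = σ + K*(tstar - s) := by linear_combination -hKt
    have hp_s : 0 ≤ K/2*s^2 - s + δ := by
      rw [hpt s]; nlinarith [mul_nonneg hσ0 hse.le, mul_pos hK (mul_pos hse hse)]
    have hdpos : (0:ℝ) < σ + K*(tstar - s) := by rw [← hden_eq]; exact hden_s
    have he' : tstar - (s + (K/2*s^2 - s + δ)/(1-K*s))
        = (K/2*(tstar - s)^2)/(σ + K*(tstar - s)) := by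
      rw [hpt s, hden_eq]
      field_simp
      ring
    refine ⟨div_nonneg hp_s hden_s.le, ?_, ?_⟩
    · rw [he']
      exact div_pos (by nlinarith [mul_pos hse hse]) hdpos
    · rw [he', div_le_iff₀ hdpos]
      nlinarith [mul_nonneg hσ0 hse.le]
  have hscal : ∀ k : ℕ, 0 ≤ kantT K δ k ∧ 0 < tstar - kantT K δ k ∧
      tstar - kantT K δ (k+1) ≤ (tstar - kantT K δ k)/2 := by
    intro k
    induction k with
    | zero =>
      refine ⟨le_refl _, by simpa [kantT] using htspos, ?_⟩
      have := (hstep 0 le_rfl (by simpa [kantT] using htspos)).2.2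
      simpa [kantT] using this
    | succ k ih =>
      obtain ⟨h0, he, hh⟩ := ih
      have hd := hstep _ h0 he
      have h0' : 0 ≤ kantT K δ (k+1) := by
        have := hd.1
        simp only [kantT]
        linarith
      have he' : 0 < tstar - kantT K δ (k+1) := by
        have := hd.2.1
        simpa [kantT] using this
      exact ⟨h0', he', (hstep _ h0' he').2.2⟩
  have hgeo : ∀ k : ℕ, tstar - kantT K δ k ≤ tstar * (1/2)^k := by
    intro k
    induction k with
    | zero => simp [kantT]
    | succ k ih =>
      have := (hscal k).2.2
      calc tstar - kantT K δ (k+1) ≤ (tstar - kantT K δ k)/2 := this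
        _ ≤ tstar * (1/2)^k / 2 := by linarith
        _ = tstar * (1/2)^(k+1) := by ring
  -- matrix facts
  have hAinv : IsUnit A.det := (F' x₀).isUnit_nonsing_inv_det hinv
  have hA1 : A⁻¹ * A = 1 := Matrix.nonsing_inv_mul A hAinv
  have hAF : A * F' x₀ = 1 := Matrix.nonsing_inv_mul (F' x₀) hinv
  set G : (Fin n → ℝ) → (Fin n → ℝ) := fun z => A.mulVec (F z) with hGdef
  -- Lipschitz estimate for A * F'
  have hGlip : ∀ x ∈ D, ∀ y ∈ D, ∀ v : Fin n → ℝ,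
      ‖(A * F' x).mulVec v - (A * F' y).mulVec v‖ ≤ K * ‖x - y‖ * ‖v‖ := by
    intro x hx y hy v
    rw [← Matrix.mulVec_mulVec, ← Matrix.mulVec_mulVec, ← Matrix.mulVec_sub]
    calc ‖A.mulVec ((F' x).mulVec v - (F' y).mulVec v)‖
        ≤ ℵ * ‖(F' x).mulVec v - (F' y).mulVec v‖ := hbound _
      _ ≤ ℵ * (L * ‖x - y‖ * ‖v‖) := by
          have := hLip x hx y hy v
          nlinarith [norm_nonneg ((F' x).mulVec v - (F' y).mulVec v)]
      _ = K * ‖x - y‖ * ‖v‖ := by rw [hKdef]; ring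
  -- core estimate
  have hcore : ∀ x ∈ D, ∀ r : ℝ, ‖x - x₀‖ ≤ r → ∀ w : Fin n → ℝ,
      ‖w‖ ≤ ‖(A * F' x).mulVec w‖ + K * r * ‖w‖ := by
    intro x hx r hr w
    have h1 : w - (A * F' x).mulVec w
        = (A * F' x₀).mulVec w - (A * F' x).mulVec w := by
      rw [hAF, Matrix.one_mulVec]
    have h2 : ‖w - (A * F' x).mulVec w‖ ≤ K * r * ‖w‖ := by
      rw [h1]
      calc ‖(A * F' x₀).mulVec w - (A * F' x).mulVec w‖
          ≤ K * ‖x₀ - x‖ * ‖w‖ := hGlip x₀ hx₀ x hx w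
        _ = K * ‖x - x₀‖ * ‖w‖ := by rw [norm_sub_rev]
        _ ≤ K * r * ‖w‖ :=
            mul_le_mul_of_nonneg_right
              (mul_le_mul_of_nonneg_left hr hK.le) (norm_nonneg w)
    calc ‖w‖ = ‖(A * F' x).mulVec w + (w - (A * F' x).mulVec w)‖ := by
          congr 1; abel
      _ ≤ ‖(A * F' x).mulVec w‖ + ‖w - (A * F' x).mulVec w‖ := norm_add_le _ _
      _ ≤ ‖(A * F' x).mulVec w‖ + K * r * ‖w‖ := by linarith
  -- invertibility + inverse bound
  have hunit : ∀ x ∈ D, ∀ r : ℝ, ‖x - x₀‖ ≤ r → K * r < 1 →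
      IsUnit (A * F' x).det ∧
      ∀ v : Fin n → ℝ, ‖(A * F' x)⁻¹.mulVec v‖ ≤ ‖v‖/(1 - K*r) := by
    intro x hx r hr hKr
    have hdet : IsUnit (A * F' x).det := by
      rw [isUnit_iff_ne_zero]
      intro h0
      obtain ⟨v, hv0, hv⟩ := (Matrix.exists_mulVec_eq_zero_iff).mpr h0
      have := hcore x hx r hr v
      rw [hv] at this
      simp only [norm_zero, zero_add] at this
      have hvpos : 0 < ‖v‖ := norm_pos_iff.mpr hv0
      nlinarith
    refine ⟨hdet, fun v => ?_⟩
    have hMw : (A * F' x).mulVec ((A * F' x)⁻¹.mulVec v) = v := by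
      rw [Matrix.mulVec_mulVec, Matrix.mul_nonsing_inv _ hdet, Matrix.one_mulVec]
    have := hcore x hx r hr ((A * F' x)⁻¹.mulVec v)
    rw [hMw] at this
    rw [le_div_iff₀ (by linarith)]
    nlinarith [norm_nonneg ((A * F' x)⁻¹.mulVec v)]
  -- quadratic (Taylor) lemma
  have hQL : ∀ x ∈ closedBall x₀ tstar, ∀ y ∈ closedBall x₀ tstar,
      ‖G y - G x - (A * F' x).mulVec (y - x)‖ ≤ K/2 * ‖y - x‖^2 := by
    intro x hx y hy
    set u := y - x with hudef
    have hmem : ∀ s ∈ Set.Icc (0:ℝ) 1, x + s • u ∈ closedBall x₀ tstar := by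
      intro s hs
      exact (convex_closedBall x₀ tstar).add_smul_sub_mem hx hy hs
    have hmemD : ∀ s ∈ Set.Icc (0:ℝ) 1, x + s • u ∈ D := fun s hs =>
      hball (hmem s hs)
    set Aclm := LinearMap.toContinuousLinearMap (Matrix.mulVecLin A) with hAclm
    have hGz : ∀ z ∈ D, HasFDerivAt G
        (Aclm.comp (LinearMap.toContinuousLinearMap ((F' z).mulVecLin))) z := by
      intro z hz
      have h1 := Aclm.hasFDerivAt.comp z (hF z hz)
      have heq : G = ⇑Aclm ∘ F := by
        funext w
        simp [hGdef, hAclm, Matrix.mulVecLin_apply]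
      rw [heq]
      exact h1
    have hline : ∀ s : ℝ, HasDerivAt (fun s : ℝ => x + s • u) u s := by
      intro s
      simpa using ((hasDerivAt_id s).smul_const u).const_add x
    set f' : ℝ → (Fin n → ℝ) := fun s =>
      (A * F' (x + s • u)).mulVec u - (A * F' x).mulVec u with hf'def
    set ψ : ℝ → (Fin n → ℝ) := fun s =>
      G (x + s • u) - s • ((A * F' x).mulVec u) with hψdef
    have hψd : ∀ s ∈ Set.uIcc (0:ℝ) 1, HasDerivAt ψ (f' s) s := by
      intro s hs
      rw [Set.uIcc_of_le (by norm_num : (0:ℝ) ≤ 1)] at hs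
      have hzD : x + s • u ∈ D := hmemD s hs
      have h1 : HasDerivAt (fun s : ℝ => G (x + s • u))
          ((A * F' (x + s • u)).mulVec u) s := by
        have h2 := (hGz _ hzD).comp_hasDerivAt s (hline s)
        exact h2.congr_deriv (by simp [hAclm, Matrix.mulVecLin_apply, ← Matrix.mulVec_mulVec])
      have h3 : HasDerivAt (fun s : ℝ => s • ((A * F' x).mulVec u))
          ((A * F' x).mulVec u) s := by
        simpa using (hasDerivAt_id s).smul_const ((A * F' x).mulVec u)
      exact h1.sub h3
    have hlipf' : ∀ a ∈ Set.uIcc (0:ℝ) 1, ∀ b ∈ Set.uIcc (0:ℝ) 1,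
        dist (f' a) (f' b) ≤ (K * ‖u‖^2) * dist a b := by
      intro a ha b hb
      rw [Set.uIcc_of_le (by norm_num : (0:ℝ) ≤ 1)] at ha hb
      have hza : x + a • u ∈ D := hmemD a ha
      have hzb : x + b • u ∈ D := hmemD b hb
      rw [dist_eq_norm, Real.dist_eq]
      have h1 : f' a - f' b
          = (A * F' (x + a • u)).mulVec u - (A * F' (x + b • u)).mulVec u := by
        simp only [hf'def]
        abel
      rw [h1]
      have h2 := hGlip _ hza _ hzb u
      have h3 : (x + a • u) - (x + b • u) = (a - b) • u := by
        module
      rw [h3] at h2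
      rw [norm_smul, Real.norm_eq_abs] at h2
      calc ‖(A * F' (x + a • u)).mulVec u - (A * F' (x + b • u)).mulVec u‖
          ≤ K * (|a - b| * ‖u‖) * ‖u‖ := h2
        _ = K * ‖u‖^2 * |a - b| := by ring
    have hcontf' : ContinuousOn f' (Set.uIcc (0:ℝ) 1) := by
      have : LipschitzOnWith (Real.toNNReal (K * ‖u‖^2)) f' (Set.uIcc (0:ℝ) 1) := by
        rw [lipschitzOnWith_iff_dist_le_mul]
        intro a ha b hb
        have := hlipf' a ha b hb
        calc dist (f' a) (f' b) ≤ (K * ‖u‖^2) * dist a b := this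
          _ ≤ _ := by
            rw [Real.coe_toNNReal _ (by positivity)]
      exact this.continuousOn
    have hint : IntervalIntegrable f' MeasureTheory.volume 0 1 :=
      hcontf'.intervalIntegrable
    have hFTC : ∫ s in (0:ℝ)..1, f' s = ψ 1 - ψ 0 :=
      intervalIntegral.integral_eq_sub_of_hasDerivAt hψd hint
    have hψ10 : ψ 1 - ψ 0 = G y - G x - (A * F' x).mulVec u := by
      have hxy : x + (1:ℝ) • u = y := by rw [hudef]; module
      have hx0 : x + (0:ℝ) • u = x := by module
      show (G (x + (1:ℝ) • u) - (1:ℝ) • ((A * F' x).mulVec u))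
          - (G (x + (0:ℝ) • u) - (0:ℝ) • ((A * F' x).mulVec u)) = _
      rw [hxy, hx0, one_smul, zero_smul]
      abel
    have hgint : IntervalIntegrable (fun s : ℝ => K * ‖u‖^2 * s)
        MeasureTheory.volume 0 1 := (continuous_const.mul continuous_id).intervalIntegrable _ _
    have hbnd : ∀ s ∈ Set.Icc (0:ℝ) 1, ‖f' s‖ ≤ K * ‖u‖^2 * s := by
      intro s hs
      have hzD : x + s • u ∈ D := hmemD s hs
      have h2 := hGlip _ hzD x (hball hx) u
      have h3 : (x + s • u) - x = s • u := by abel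
      rw [h3, norm_smul, Real.norm_eq_abs, abs_of_nonneg hs.1] at h2
      calc ‖f' s‖ = ‖(A * F' (x + s • u)).mulVec u - (A * F' x).mulVec u‖ := rfl
        _ ≤ K * (s * ‖u‖) * ‖u‖ := h2
        _ = K * ‖u‖^2 * s := by ring
    calc ‖G y - G x - (A * F' x).mulVec u‖
        = ‖∫ s in (0:ℝ)..1, f' s‖ := by rw [hFTC, hψ10]
      _ ≤ ∫ s in (0:ℝ)..1, ‖f' s‖ :=
          intervalIntegral.norm_integral_le_integral_norm (by norm_num)
      _ ≤ ∫ s in (0:ℝ)..1, K * ‖u‖^2 * s := by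
          apply intervalIntegral.integral_mono_on (by norm_num) hint.norm hgint
          exact hbnd
      _ = K/2 * ‖u‖^2 := by
          rw [intervalIntegral.integral_const_mul, integral_id]
          ring
  -- the iterates
  set X : ℕ → (Fin n → ℝ) := fun k => (newtonStep F F')^[k] x₀ with hXdef
  -- the key induction step
  have hkey : ∀ k : ℕ, ‖X k - x₀‖ ≤ kantT K δ k →
      ‖G (X k)‖ ≤ K/2*(kantT K δ k)^2 - kantT K δ k + δ →
      IsUnit (F' (X k)).det ∧ ‖X (k+1) - X k‖ ≤ kantT K δ (k+1) - kantT K δ k ∧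
      ‖X (k+1) - x₀‖ ≤ kantT K δ (k+1) ∧
      ‖G (X (k+1))‖ ≤ K/2*(kantT K δ (k+1))^2 - kantT K δ (k+1) + δ := by
    intro k hx1 hx2
    have he := (hscal k).2.1
    have h0 := (hscal k).1
    have hdk := hstep _ h0 he
    have hdenk : 0 < 1 - K * kantT K δ k := hden _ he
    have hKr : K * kantT K δ k < 1 := by linarith
    have hxball : X k ∈ closedBall x₀ tstar := by
      rw [mem_closedBall, dist_eq_norm]
      linarith
    have hxD : X k ∈ D := hball hxball
    obtain ⟨hdet, hbnd⟩ := hunit _ hxD _ hx1 hKr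
    have hdetF : IsUnit (F' (X k)).det := by
      rw [Matrix.det_mul] at hdet
      exact isUnit_of_mul_isUnit_right hdet
    have hXsucc : X (k+1) = X k - (A * F' (X k))⁻¹.mulVec (G (X k)) := by
      have h1 : X (k+1) = newtonStep F F' (X k) := Function.iterate_succ_apply' _ _ _
      have h2 : (A * F' (X k))⁻¹.mulVec (G (X k)) = (F' (X k))⁻¹.mulVec (F (X k)) := by
        show (A * F' (X k))⁻¹.mulVec (A.mulVec (F (X k))) = _
        rw [Matrix.mul_inv_rev, Matrix.mulVec_mulVec, Matrix.mul_assoc, hA1,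
          Matrix.mul_one]
      rw [h1, h2]
      rfl
    have hstepn : ‖X (k+1) - X k‖ ≤ kantT K δ (k+1) - kantT K δ k := by
      have h3 : X (k+1) - X k = -((A * F' (X k))⁻¹.mulVec (G (X k))) := by
        rw [hXsucc]; abel
      rw [h3, norm_neg]
      calc ‖(A * F' (X k))⁻¹.mulVec (G (X k))‖
          ≤ ‖G (X k)‖ / (1 - K * kantT K δ k) := hbnd _
        _ ≤ (K/2*(kantT K δ k)^2 - kantT K δ k + δ) / (1 - K * kantT K δ k) := by
            gcongr
        _ = kantT K δ (k+1) - kantT K δ k := by rw [kantT_succ]; ring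
    have hx1' : ‖X (k+1) - x₀‖ ≤ kantT K δ (k+1) := by
      have h4 := norm_add_le (X (k+1) - X k) (X k - x₀)
      have h5 : X (k+1) - X k + (X k - x₀) = X (k+1) - x₀ := by abel
      rw [h5] at h4
      linarith
    have he1 : 0 < tstar - kantT K δ (k+1) := (hscal (k+1)).2.1
    have hyball : X (k+1) ∈ closedBall x₀ tstar := by
      rw [mem_closedBall, dist_eq_norm]; linarith
    have hM : (A * F' (X k)).mulVec (X (k+1) - X k) = -(G (X k)) := by
      have h6 : X (k+1) - X k = -((A * F' (X k))⁻¹.mulVec (G (X k))) := by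
        rw [hXsucc]; abel
      rw [h6, Matrix.mulVec_neg, Matrix.mulVec_mulVec,
        Matrix.mul_nonsing_inv _ hdet, Matrix.one_mulVec]
    have hql := hQL _ hxball _ hyball
    rw [hM] at hql
    have h7 : G (X (k+1)) - G (X k) - -(G (X k)) = G (X (k+1)) := by abel
    rw [h7] at hql
    refine ⟨hdetF, hstepn, hx1', ?_⟩
    have hstep0 : 0 ≤ kantT K δ (k+1) - kantT K δ k := by
      rw [kantT_succ]
      have := hdk.1
      linarith
    calc ‖G (X (k+1))‖ ≤ K/2 * ‖X (k+1) - X k‖^2 := hql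
      _ ≤ K/2 * (kantT K δ (k+1) - kantT K δ k)^2 := by
          have h9 := pow_le_pow_left₀ (norm_nonneg (X (k+1) - X k)) hstepn 2
          have h10 : (0:ℝ) ≤ K/2 := by positivity
          exact mul_le_mul_of_nonneg_left h9 h10
      _ = K/2*(kantT K δ (k+1))^2 - kantT K δ (k+1) + δ := by
          have hn := kant_newton K δ (kantT K δ k) (ne_of_gt hdenk)
          rw [kantT_succ]
          linear_combination -hn
  have hInv : ∀ k : ℕ, ‖X k - x₀‖ ≤ kantT K δ k ∧
      ‖G (X k)‖ ≤ K/2*(kantT K δ k)^2 - kantT K δ k + δ := by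
    intro k
    induction k with
    | zero =>
      constructor
      · have h1 : X 0 = x₀ := rfl
        rw [h1, kantT_zero]
        simp
      · have h1 : X 0 = x₀ := rfl
        rw [h1, kantT_zero]
        have h2 : ‖G x₀‖ ≤ δ := hFx₀
        nlinarith
    | succ k ih => exact ⟨(hkey k ih.1 ih.2).2.2.1, (hkey k ih.1 ih.2).2.2.2⟩
  have hpart1 : ∀ k : ℕ, X k ∈ closedBall x₀ tstar ∧ IsUnit (F' (X k)).det := by
    intro k
    have h1 := (hInv k).1
    have h2 := (hscal k).2.1
    exact ⟨by rw [mem_closedBall, dist_eq_norm]; linarith,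
      (hkey k (hInv k).1 (hInv k).2).1⟩
  have hcauchy : CauchySeq X := by
    apply cauchySeq_of_le_geometric (1/2 : ℝ) tstar (by norm_num)
    intro k
    rw [dist_eq_norm, norm_sub_rev]
    have h1 := (hkey k (hInv k).1 (hInv k).2).2.1
    have h2 := (hscal (k+1)).2.1
    have h3 := hgeo k
    calc ‖X (k+1) - X k‖ ≤ kantT K δ (k+1) - kantT K δ k := h1
      _ ≤ tstar - kantT K δ k := by linarith
      _ ≤ tstar * (1/2)^k := h3
  obtain ⟨xstar, hxstar⟩ := cauchySeq_tendsto_of_complete hcauchy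
  have hxsball : xstar ∈ closedBall x₀ tstar :=
    Metric.isClosed_closedBall.mem_of_tendsto hxstar
      (Filter.Eventually.of_forall fun k => (hpart1 k).1)
  have htt : Tendsto (fun k => kantT K δ k) atTop (nhds tstar) := by
    have h1 : Tendsto (fun k : ℕ => tstar * (1/2:ℝ)^k) atTop (nhds 0) := by
      have h0 := tendsto_pow_atTop_nhds_zero_of_lt_one
        (by norm_num : (0:ℝ) ≤ 1/2) (by norm_num : (1/2:ℝ) < 1)
      simpa using h0.const_mul tstar
    have h2 : Tendsto (fun k => tstar - kantT K δ k) atTop (nhds 0) :=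
      squeeze_zero (fun k => (hscal k).2.1.le) hgeo h1
    have h3 : Tendsto (fun k : ℕ => tstar - (tstar - kantT K δ k)) atTop
        (nhds (tstar - 0)) := Tendsto.sub tendsto_const_nhds h2
    simpa using h3
  have hpts : K/2*tstar^2 - tstar + δ = 0 := by
    have := hpt tstar
    simpa using this
  have hp0 : Tendsto (fun k => K/2*(kantT K δ k)^2 - kantT K δ k + δ)
      atTop (nhds 0) := by
    have hc : Continuous (fun s : ℝ => K/2*s^2 - s + δ) := by continuity
    have h1 := (hc.tendsto tstar).comp htt
    rw [hpts] at h1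
    exact h1
  have hGX0 : Tendsto (fun k => ‖G (X k)‖) atTop (nhds 0) :=
    squeeze_zero (fun k => norm_nonneg _) (fun k => (hInv k).2) hp0
  have hcontF : ContinuousAt F xstar := (hF xstar (hball hxsball)).continuousAt
  have hAc : Continuous (fun v : Fin n → ℝ => A.mulVec v) := by
    have h := LinearMap.continuous_of_finiteDimensional (Matrix.mulVecLin A)
    exact h.congr fun v => by simp [Matrix.mulVecLin_apply]
  have hGX : Tendsto (fun k => G (X k)) atTop (nhds (G xstar)) := by
    have h1 : Tendsto (fun k => F (X k)) atTop (nhds (F xstar)) :=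
      hcontF.tendsto.comp hxstar
    exact (hAc.tendsto (F xstar)).comp h1
  have hGxs : G xstar = 0 := by
    have h1 : Tendsto (fun k => ‖G (X k)‖) atTop (nhds ‖G xstar‖) := hGX.norm
    exact norm_eq_zero.mp (tendsto_nhds_unique h1 hGX0)
  have hFxs : F xstar = 0 := by
    have h1 : A⁻¹.mulVec (A.mulVec (F xstar)) = F xstar := by
      rw [Matrix.mulVec_mulVec, hA1, Matrix.one_mulVec]
    have h2 : A.mulVec (F xstar) = 0 := hGxs
    rw [← h1, h2, Matrix.mulVec_zero]
  exact ⟨fun k => hpart1 k, ⟨xstar, subset_closure hxsball, hxstar, hFxs⟩⟩
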